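/- Let (C, ⊗, e, α, β, γ, σ) be a symmetric monoidal category, A a commutative comonoid, and r : B → A ⊗ A a morphism of comonoids (a relation on A) where B carries a comonoid structure (δ_B, ε_B). Define δ^l = (γ_A ⊗ 1_B) ∘ ((1_A ⊗ ε_A) ⊗ 1_B) ∘ (r ⊗ 1_B) ∘ δ_B and δ^r = (1_B ⊗ β_A) ∘ (1_B ⊗ (ε_A ⊗ 1_A)) ∘ (1_B ⊗ r) ∘ δ_B. Then {δ^l, δ^r} makes B an A-A bicomodule: δ^l is a coassociative counital left A-coaction, δ^r a coassociative counital right A-coaction, and the two coactions commute: (δ^l ⊗ 1_A) ∘ δ^r = α_{A,B,A}^{-1} ∘ (1_A ⊗ δ^r) ∘ δ^l (up to associators). -/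

import Mathlib

open CategoryTheory MonoidalCategory

variable {C : Type*} [Category C] [MonoidalCategory C] [SymmetricCategory C]

/-- A C-category structure on a symmetric monoidal category: every object carries a
fixed cocommutative comonoid structure, naturally in the object and compatibly with
the tensor product. -/
structure CStructure (C : Type*) [Category C] [MonoidalCategory C]
    [SymmetricCategory C] where
  δ : ∀ X : C, X ⟶ X ⊗ X
  ε : ∀ X : C, X ⟶ 𝟙_ C
  coassoc : ∀ X : C, δ X ≫ (X ◁ δ X) ≫ (α_ X X X).inv = δ X ≫ (δ X ▷ X)
  counit_left : ∀ X : C, δ X ≫ (ε X ▷ X) ≫ (λ_ X).hom = 𝟙 X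
  counit_right : ∀ X : C, δ X ≫ (X ◁ ε X) ≫ (ρ_ X).hom = 𝟙 X
  cocomm : ∀ X : C, δ X ≫ (β_ X X).hom = δ X
  δ_natural : ∀ {X Y : C} (f : X ⟶ Y), f ≫ δ Y = δ X ≫ (f ⊗ₘ f)
  ε_natural : ∀ {X Y : C} (f : X ⟶ Y), f ≫ ε Y = ε X
  δ_tensor : ∀ X Y : C, δ (X ⊗ Y) =
    (δ X ⊗ₘ δ Y) ≫ (α_ X X (Y ⊗ Y)).hom ≫ (X ◁ (α_ X Y Y).inv) ≫
      (X ◁ ((β_ X Y).hom ▷ Y)) ≫ (X ◁ (α_ Y X Y).hom) ≫ (α_ X Y (X ⊗ Y)).inv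
  ε_tensor : ∀ X Y : C, ε (X ⊗ Y) = (ε X ⊗ₘ ε Y) ≫ (λ_ (𝟙_ C)).hom

/-- `(dl, dr)` is an `A-A` bicomodule structure on `B`: `dl` is a coassociative
counital left `A`-coaction, `dr` a coassociative counital right `A`-coaction, and
the two coactions commute (up to associators). -/
lemma aux_left_coassoc (S : CStructure C) {A B : C} (f : B ⟶ A) :
    (S.δ B ≫ f ▷ B) ≫ (A ◁ (S.δ B ≫ f ▷ B)) ≫ (α_ A A B).inv
      = (S.δ B ≫ f ▷ B) ≫ (S.δ A ▷ B) := by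
  calc (S.δ B ≫ f ▷ B) ≫ (A ◁ (S.δ B ≫ f ▷ B)) ≫ (α_ A A B).inv
      = S.δ B ≫ (f ▷ B ≫ A ◁ S.δ B) ≫ A ◁ (f ▷ B) ≫ (α_ A A B).inv := by
        simp only [Category.assoc, MonoidalCategory.whiskerLeft_comp]
    _ = S.δ B ≫ (B ◁ S.δ B ≫ f ▷ (B ⊗ B)) ≫ A ◁ (f ▷ B) ≫ (α_ A A B).inv := by
        rw [whisker_exchange]
    _ = S.δ B ≫ B ◁ S.δ B ≫ (f ⊗ₘ (f ⊗ₘ 𝟙 B)) ≫ (α_ A A B).inv := by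
        simp [MonoidalCategory.tensorHom_def]
    _ = S.δ B ≫ B ◁ S.δ B ≫ (α_ B B B).inv ≫ ((f ⊗ₘ f) ▷ B) := by
        rw [associator_inv_naturality, tensorHom_id]
    _ = S.δ B ≫ S.δ B ▷ B ≫ ((f ⊗ₘ f) ▷ B) := by
        rw [reassoc_of% (S.coassoc B)]
    _ = (S.δ B ≫ f ▷ B) ≫ S.δ A ▷ B := by
        simp only [Category.assoc, ← comp_whiskerRight, ← S.δ_natural]

lemma aux_left_counit (S : CStructure C) {A B : C} (f : B ⟶ A) :
    (S.δ B ≫ f ▷ B) ≫ (S.ε A ▷ B) ≫ (λ_ B).hom = 𝟙 B := by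
  simp only [Category.assoc, ← comp_whiskerRight_assoc]
  rw [S.ε_natural f, S.counit_left]

lemma aux_right_coassoc (S : CStructure C) {A B : C} (g : B ⟶ A) :
    (S.δ B ≫ B ◁ g) ≫ (B ◁ S.δ A) ≫ (α_ B A A).inv
      = (S.δ B ≫ B ◁ g) ≫ ((S.δ B ≫ B ◁ g) ▷ A) := by
  calc (S.δ B ≫ B ◁ g) ≫ (B ◁ S.δ A) ≫ (α_ B A A).inv
      = S.δ B ≫ B ◁ (g ≫ S.δ A) ≫ (α_ B A A).inv := by
        simp only [Category.assoc, MonoidalCategory.whiskerLeft_comp]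
    _ = S.δ B ≫ B ◁ S.δ B ≫ (𝟙 B ⊗ₘ (g ⊗ₘ g)) ≫ (α_ B A A).inv := by
        rw [S.δ_natural g]
        simp [id_tensorHom]
    _ = S.δ B ≫ B ◁ S.δ B ≫ (α_ B B B).inv ≫ ((𝟙 B ⊗ₘ g) ⊗ₘ g) := by
        rw [associator_inv_naturality]
    _ = S.δ B ≫ S.δ B ▷ B ≫ ((B ◁ g) ⊗ₘ g) := by
        rw [reassoc_of% (S.coassoc B), id_tensorHom]
    _ = (S.δ B ≫ B ◁ g) ≫ ((S.δ B ≫ B ◁ g) ▷ A) := by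
        simp only [Category.assoc, comp_whiskerRight, tensorHom_def']
        rw [← whisker_exchange_assoc]

lemma aux_right_counit (S : CStructure C) {A B : C} (g : B ⟶ A) :
    (S.δ B ≫ B ◁ g) ≫ (B ◁ S.ε A) ≫ (ρ_ B).hom = 𝟙 B := by
  simp only [Category.assoc, ← MonoidalCategory.whiskerLeft_comp_assoc]
  rw [S.ε_natural g, S.counit_right]

lemma aux_commute (S : CStructure C) {A B : C} (f g : B ⟶ A) :
    (S.δ B ≫ B ◁ g) ≫ ((S.δ B ≫ f ▷ B) ▷ A)
      = (S.δ B ≫ f ▷ B) ≫ (A ◁ (S.δ B ≫ B ◁ g)) ≫ (α_ A B A).inv := by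
  calc (S.δ B ≫ B ◁ g) ≫ ((S.δ B ≫ f ▷ B) ▷ A)
      = S.δ B ≫ (B ◁ g ≫ S.δ B ▷ A) ≫ (f ▷ B) ▷ A := by
        simp only [Category.assoc, comp_whiskerRight]
    _ = S.δ B ≫ S.δ B ▷ B ≫ ((B ⊗ B) ◁ g ≫ (f ▷ B) ▷ A) := by
        rw [whisker_exchange]
        simp only [Category.assoc]
    _ = S.δ B ≫ S.δ B ▷ B ≫ ((f ▷ B) ⊗ₘ g) := by
        rw [← tensorHom_def']
    _ = S.δ B ≫ B ◁ S.δ B ≫ (α_ B B B).inv ≫ ((f ▷ B) ⊗ₘ g) := by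
        rw [reassoc_of% (S.coassoc B)]
    _ = S.δ B ≫ B ◁ S.δ B ≫ (f ⊗ₘ (𝟙 B ⊗ₘ g)) ≫ (α_ A B A).inv := by
        rw [← tensorHom_id f B, ← associator_inv_naturality]
    _ = (S.δ B ≫ f ▷ B) ≫ (A ◁ (S.δ B ≫ B ◁ g)) ≫ (α_ A B A).inv := by
        simp only [Category.assoc, MonoidalCategory.whiskerLeft_comp,
          MonoidalCategory.tensorHom_def, id_tensorHom]
        rw [whisker_exchange_assoc]
        simp


def IsBicomodule (A : C) (δA : A ⟶ A ⊗ A) (εA : A ⟶ 𝟙_ C)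
    (B : C) (dl : B ⟶ A ⊗ B) (dr : B ⟶ B ⊗ A) : Prop :=
  (dl ≫ (A ◁ dl) ≫ (α_ A A B).inv = dl ≫ (δA ▷ B)) ∧
  (dl ≫ (εA ▷ B) ≫ (λ_ B).hom = 𝟙 B) ∧
  (dr ≫ (B ◁ δA) ≫ (α_ B A A).inv = dr ≫ (dr ▷ A)) ∧
  (dr ≫ (B ◁ εA) ≫ (ρ_ B).hom = 𝟙 B) ∧
  (dr ≫ (dl ▷ A) = dl ≫ (A ◁ dr) ≫ (α_ A B A).inv)

/-- In a C-category, any relation `r : B ⟶ A ⊗ A` on `A` induces an `A-A` bicomodule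
structure `(δ^l, δ^r)` on `B`, where
`δ^l = (γ_A ⊗ 1_B) ∘ ((1_A ⊗ ε_A) ⊗ 1_B) ∘ (r ⊗ 1_B) ∘ δ_B` and
`δ^r = (1_B ⊗ β_A) ∘ (1_B ⊗ (ε_A ⊗ 1_A)) ∘ (1_B ⊗ r) ∘ δ_B`. -/
theorem relation_isBicomodule (S : CStructure C) (A B : C) (r : B ⟶ A ⊗ A) :
    IsBicomodule A (S.δ A) (S.ε A) B
      (S.δ B ≫ (r ▷ B) ≫ ((A ◁ S.ε A) ▷ B) ≫ ((ρ_ A).hom ▷ B))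
      (S.δ B ≫ (B ◁ r) ≫ (B ◁ (S.ε A ▷ A)) ≫ (B ◁ (λ_ A).hom)) := by
  
  have hdl : S.δ B ≫ (r ▷ B) ≫ ((A ◁ S.ε A) ▷ B) ≫ ((ρ_ A).hom ▷ B)
      = S.δ B ≫ ((r ≫ (A ◁ S.ε A) ≫ (ρ_ A).hom) ▷ B) := by
    simp only [comp_whiskerRight, Category.assoc]
  have hdr : S.δ B ≫ (B ◁ r) ≫ (B ◁ (S.ε A ▷ A)) ≫ (B ◁ (λ_ A).hom)
      = S.δ B ≫ (B ◁ (r ≫ (S.ε A ▷ A) ≫ (λ_ A).hom)) := by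
    simp only [MonoidalCategory.whiskerLeft_comp, Category.assoc]
  rw [IsBicomodule, hdl, hdr]
  exact ⟨aux_left_coassoc S _, aux_left_counit S _, aux_right_coassoc S _,
    aux_right_counit S _, aux_commute S _ _⟩
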